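/- arXiv:1908.07854 — 2 statements merged into one kernel-verified Lean document; each statement's English description precedes it below -/
import Mathlib

section
/- Let n ≥ 4 be an even integer and Λ = Cay(D_{2n}, Ψ) with Ψ = {b, ab, ..., a^{n-1}b} ∪ {a^{n/2}}. The automorphism group of Λ equals the automorphism group of its complement, and is isomorphic to (Z_2 wr Sym(n/2)) wr Sym(2), i.e., the wreath product of the automorphism group of the cocktail party graph CP(n/2) with Sym(2). -/
/-- The Cayley graph of a group with connection set `S`. -/
def cayley {G : Type*} [Group G] (S : Set G) : SimpleGraph G :=
  SimpleGraph.fromRel (fun x y => x⁻¹ * y ∈ S)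

/-- The connection set `Ψ = {b, ab, …, a^{n-1}b} ∪ {a^{n/2}}` in the dihedral group. -/
def Psi (n : ℕ) : Set (DihedralGroup n) :=
  {x | ∃ i : ZMod n, x = DihedralGroup.sr i} ∪ {DihedralGroup.r ((n / 2 : ℕ) : ZMod n)}
/-- The action of a permutation of `Fin m` on `Fin m → A` by permuting coordinates. -/
def permMulAut (m : ℕ) (A : Type*) [Group A] : Equiv.Perm (Fin m) →* MulAut (Fin m → A) where
  toFun σ := MulEquiv.arrowCongr σ (MulEquiv.refl A)
  map_one' := by ext f i; rfl
  map_mul' := by intro σ τ; ext f i; rfl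

/-- The wreath product `A wr Sym(m)` of a group `A` with the symmetric group on `m` points. -/
def Wr (A : Type*) [Group A] (m : ℕ) : Type _ :=
  SemidirectProduct (Fin m → A) (Equiv.Perm (Fin m)) (permMulAut m A)

instance (A : Type*) [Group A] (m : ℕ) : Group (Wr A m) :=
  inferInstanceAs (Group (SemidirectProduct _ _ (permMulAut m A)))

namespace CayleyAux

/-! ### Generic `Wr` API -/

section WrAPI

variable {A : Type*} [Group A] {k : ℕ}

def Wr.mk (f : Fin k → A) (σ : Equiv.Perm (Fin k)) : Wr A k :=
  SemidirectProduct.mk f σ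

def Wr.left (u : Wr A k) : Fin k → A :=
  SemidirectProduct.left u

def Wr.right (u : Wr A k) : Equiv.Perm (Fin k) :=
  SemidirectProduct.right u

@[simp] lemma Wr.left_mk (f : Fin k → A) (σ) : (Wr.mk f σ).left = f := rfl
@[simp] lemma Wr.right_mk (f : Fin k → A) (σ) : (Wr.mk f σ).right = σ := rfl
@[simp] lemma Wr.left_one : (1 : Wr A k).left = fun _ => 1 := rfl
@[simp] lemma Wr.right_one : (1 : Wr A k).right = 1 := rfl
lemma Wr.left_mul (u v : Wr A k) (i : Fin k) :
    (u * v).left i = u.left i * v.left (u.right⁻¹ i) := rfl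
@[simp] lemma Wr.right_mul (u v : Wr A k) : (u * v).right = u.right * v.right := rfl

lemma Wr.ext {u v : Wr A k} (h1 : u.left = v.left) (h2 : u.right = v.right) : u = v :=
  SemidirectProduct.ext h1 h2

end WrAPI

/-! ### The model graph -/

abbrev Z2 := Multiplicative (ZMod 2)

abbrev X (m : ℕ) := Fin m × ZMod 2

abbrev V (m : ℕ) := Fin 2 × X m

abbrev W (m : ℕ) := Wr Z2 m

def GG (m : ℕ) : SimpleGraph (V m) where
  Adj u v := u.1 ≠ v.1 ∨ (u.2.1 = v.2.1 ∧ u.2.2 ≠ v.2.2)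
  symm := by
    constructor
    rintro u v (h | ⟨h1, h2⟩)
    · exact Or.inl h.symm
    · exact Or.inr ⟨h1.symm, h2.symm⟩
  loopless := by constructor; rintro u (h | ⟨h1, h2⟩) <;> simp_all

lemma GG_adj {m : ℕ} (u v : V m) :
    (GG m).Adj u v ↔ u.1 ≠ v.1 ∨ (u.2.1 = v.2.1 ∧ u.2.2 ≠ v.2.2) := Iff.rfl

/-! ### The action of `Wr (W m) 2` on the model graph -/

variable {m : ℕ}

def actX (w : W m) (x : X m) : X m :=
  (w.right x.1, x.2 + Multiplicative.toAdd (w.left (w.right x.1)))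

lemma actX_one (x : X m) : actX (1 : W m) x = x := by
  simp [actX]

lemma actX_mul (w₁ w₂ : W m) (x : X m) :
    actX (w₁ * w₂) x = actX w₁ (actX w₂ x) := by
  obtain ⟨p, s⟩ := x
  simp only [actX, Wr.left_mul, Wr.right_mul, Equiv.Perm.mul_apply]
  refine Prod.ext rfl ?_
  simp only []
  rw [Equiv.Perm.inv_def, Equiv.symm_apply_apply]
  show s + (Multiplicative.toAdd _ + Multiplicative.toAdd _) = _
  ring

def actV (u : Wr (W m) 2) (v : V m) : V m :=
  (u.right v.1, actX (u.left (u.right v.1)) v.2)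

lemma actV_one (v : V m) : actV (1 : Wr (W m) 2) v = v := by
  simp [actV, actX_one]

lemma actV_mul (u₁ u₂ : Wr (W m) 2) (v : V m) :
    actV (u₁ * u₂) v = actV u₁ (actV u₂ v) := by
  obtain ⟨c, x⟩ := v
  simp only [actV, Wr.right_mul, Equiv.Perm.mul_apply]
  refine Prod.ext rfl ?_
  simp only []
  rw [Wr.left_mul, actX_mul, Equiv.Perm.inv_def, Equiv.symm_apply_apply]

lemma actV_adj (u : Wr (W m) 2) (a b : V m) :
    (GG m).Adj (actV u a) (actV u b) ↔ (GG m).Adj a b := by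
  obtain ⟨c, p, s⟩ := a
  obtain ⟨d, q, t⟩ := b
  by_cases hcd : c = d
  · subst hcd
    simp only [GG_adj, actV, ne_eq, not_true, EmbeddingLike.apply_eq_iff_eq, actX]
    by_cases hpq : p = q
    · subst hpq
      simp [add_left_inj]
    · simp [hpq, fun h => hpq ((u.left (u.right c)).right.injective h)]
  · have : u.right c ≠ u.right d := fun h => hcd (u.right.injective h)
    simp [GG_adj, actV, hcd, this]

def Phi (m : ℕ) : Wr (W m) 2 →* ((GG m) ≃g (GG m)) where
  toFun u :=
    { toEquiv :=
        { toFun := actV u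
          invFun := actV u⁻¹
          left_inv := fun v => by rw [← actV_mul, inv_mul_cancel, actV_one]
          right_inv := fun v => by rw [← actV_mul, mul_inv_cancel, actV_one] }
      map_rel_iff' := actV_adj u _ _ }
  map_one' := RelIso.ext fun v => actV_one v
  map_mul' u₁ u₂ := RelIso.ext fun v => actV_mul u₁ u₂ v

lemma Phi_apply (u : Wr (W m) 2) (v : V m) : Phi m u v = actV u v := rfl

end CayleyAux

namespace CayleyAux

variable {m : ℕ}

lemma not_adj_fst {a b : V m} (h : ¬ (GG m).Adj a b) : a.1 = b.1 :=
  by_contra fun hne => h (Or.inl hne)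

/-- An automorphism preserves the class (first coordinate) partition. -/
lemma aut_fst_eq (hm : 2 ≤ m) (ψ : (GG m) ≃g (GG m)) {a b : V m} (h : a.1 = b.1) :
    (ψ a).1 = (ψ b).1 := by
  obtain ⟨c, x⟩ := a
  obtain ⟨c', y⟩ := b
  cases h
  by_cases had : (GG m).Adj (c, x) (c, y)
  · -- matched pair: go through a third vertex in another pair
    have hxy : x.1 = y.1 := by
      rcases had with h | ⟨h1, _⟩
      · exact absurd rfl h
      · exact h1
    obtain ⟨p', hp'⟩ : ∃ p' : Fin m, p' ≠ x.1 := by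
      haveI : Nontrivial (Fin m) :=
        ⟨⟨⟨0, by omega⟩, ⟨1, by omega⟩, by simp [Fin.ext_iff]⟩⟩
      exact exists_ne x.1
    set w : V m := (c, p', 0) with hw
    have h1 : ¬ (GG m).Adj (c, x) w := by
      rintro (h | ⟨h1, _⟩)
      · exact h rfl
      · exact hp' h1.symm
    have h2 : ¬ (GG m).Adj w (c, y) := by
      rintro (h | ⟨h1, _⟩)
      · exact h rfl
      · exact hp' (h1.trans hxy.symm)
    have g1 : ¬ (GG m).Adj (ψ (c, x)) (ψ w) := fun h => h1 (ψ.map_rel_iff.mp h)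
    have g2 : ¬ (GG m).Adj (ψ w) (ψ (c, y)) := fun h => h2 (ψ.map_rel_iff.mp h)
    exact (not_adj_fst g1).trans (not_adj_fst g2)
  · exact not_adj_fst fun h => had (ψ.map_rel_iff.mp h)

lemma aut_fst_iff (hm : 2 ≤ m) (ψ : (GG m) ≃g (GG m)) (a b : V m) :
    (ψ a).1 = (ψ b).1 ↔ a.1 = b.1 := by
  refine ⟨fun h => ?_, aut_fst_eq hm ψ⟩
  have := aut_fst_eq hm ψ.symm (a := ψ a) (b := ψ b) h
  simpa using this

/-- An automorphism preserves the matching. -/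
lemma aut_matched (hm : 2 ≤ m) (ψ : (GG m) ≃g (GG m)) {a b : V m} (h : a.1 = b.1) :
    ((ψ a).2.1 = (ψ b).2.1 ∧ (ψ a).2.2 ≠ (ψ b).2.2) ↔ (a.2.1 = b.2.1 ∧ a.2.2 ≠ b.2.2) := by
  have h' : (ψ a).1 = (ψ b).1 := aut_fst_eq hm ψ h
  have := ψ.map_rel_iff (a := a) (b := b)
  rw [GG_adj, GG_adj] at this
  simp only [h, h', ne_eq, not_true] at this
  simpa using this

lemma phi_surjective (hm : 2 ≤ m) : Function.Surjective (Phi m) := by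
  intro φ
  classical
  -- the class permutation
  set k : Fin 2 → Fin 2 := fun c => (φ (c, ⟨0, by omega⟩, 0)).1 with hk_def
  have hk : ∀ a : V m, (φ a).1 = k a.1 := fun a => aut_fst_eq hm φ rfl
  have kinj : Function.Injective k := by
    intro c d h
    have := (aut_fst_iff hm φ (c, ⟨0, by omega⟩, 0) (d, ⟨0, by omega⟩, 0)).mp h
    exact this
  let σ : Equiv.Perm (Fin 2) := Equiv.ofBijective k (Finite.injective_iff_bijective.mp kinj)
  have hσ : ∀ c, σ c = k c := fun _ => rfl
  -- the inner maps
  set ψ : Fin 2 → X m → X m := fun c x => (φ (c, x)).2 with hψ_def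
  set τf : Fin 2 → Fin m → Fin m := fun c p => (ψ c (p, 0)).1 with hτf_def
  have zcases : ∀ s : ZMod 2, s = 0 ∨ s = 1 := by decide
  have hmatch : ∀ (c : Fin 2) (x y : X m),
      ((ψ c x).1 = (ψ c y).1 ∧ (ψ c x).2 ≠ (ψ c y).2) ↔ (x.1 = y.1 ∧ x.2 ≠ y.2) :=
    fun c x y => aut_matched hm φ (a := (c, x)) (b := (c, y)) rfl
  have hτ1 : ∀ (c : Fin 2) (p : Fin m) (s : ZMod 2), (ψ c (p, s)).1 = τf c p := by
    intro c p s
    rcases zcases s with rfl | rfl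
    · rfl
    · exact ((hmatch c (p, 1) (p, 0)).mpr ⟨rfl, (by decide : (1 : ZMod 2) ≠ 0)⟩).1
  have ψinj : ∀ c, Function.Injective (ψ c) := by
    intro c x y h
    have h1 : φ (c, x) = φ (c, y) := by
      refine Prod.ext ?_ h
      rw [hk (c, x), hk (c, y)]
    have := φ.injective h1
    exact (Prod.ext_iff.mp this).2
  have τinj : ∀ c, Function.Injective (τf c) := by
    intro c p q h
    by_cases h2 : (ψ c (p, 0)).2 = (ψ c (q, 0)).2
    · have : ψ c (p, 0) = ψ c (q, 0) := Prod.ext h h2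
      exact (Prod.ext_iff.mp (ψinj c this)).1
    · have := (hmatch c (p, 0) (q, 0)).mp ⟨h, h2⟩
      exact absurd rfl this.2
  let τ : Fin 2 → Equiv.Perm (Fin m) :=
    fun c => Equiv.ofBijective (τf c) (Finite.injective_iff_bijective.mp (τinj c))
  have hτ : ∀ c p, τ c p = τf c p := fun _ _ => rfl
  set g : Fin 2 → Fin m → Z2 :=
    fun c q => Multiplicative.ofAdd ((ψ c ((τ c).symm q, 0)).2) with hg_def
  have hg : ∀ c p, Multiplicative.toAdd (g c (τf c p)) = (ψ c (p, 0)).2 := by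
    intro c p
    have : (τ c).symm (τf c p) = p := by
      rw [← hτ c p, Equiv.symm_apply_apply]
    simp only [hg_def, this, toAdd_ofAdd]
  have hψ : ∀ (c : Fin 2) (p : Fin m) (s : ZMod 2),
      ψ c (p, s) = (τf c p, s + Multiplicative.toAdd (g c (τf c p))) := by
    intro c p s
    refine Prod.ext (hτ1 c p s) ?_
    rw [hg c p]
    rcases zcases s with rfl | rfl
    · rw [zero_add]
    · have hne : (ψ c (p, 1)).2 ≠ (ψ c (p, 0)).2 :=
        ((hmatch c (p, 1) (p, 0)).mpr ⟨rfl, (by decide : (1 : ZMod 2) ≠ 0)⟩).2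
      have : ∀ a b : ZMod 2, a ≠ b → a = 1 + b := by decide
      exact this _ _ hne
  -- assemble the element
  refine ⟨Wr.mk (fun d => Wr.mk (g (σ.symm d)) (τ (σ.symm d))) σ, ?_⟩
  apply RelIso.ext
  rintro ⟨c, p, s⟩
  rw [Phi_apply]
  show ((Wr.mk _ σ).right c,
    actX ((Wr.mk (fun d => Wr.mk (g (σ.symm d)) (τ (σ.symm d))) σ).left ((Wr.mk _ σ).right c)) (p, s))
    = φ (c, p, s)
  rw [Wr.right_mk, Wr.left_mk]
  have hcc : σ.symm (σ c) = c := Equiv.symm_apply_apply σ c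
  show (σ c, actX (Wr.mk (g (σ.symm (σ c))) (τ (σ.symm (σ c)))) (p, s)) = φ (c, p, s)
  rw [hcc]
  have : actX (Wr.mk (g c) (τ c)) (p, s) = ψ c (p, s) := by
    rw [hψ c p s]
    rfl
  rw [this]
  refine Prod.ext ?_ rfl
  rw [hk (c, p, s)]
  rfl

lemma phi_injective (hm : 2 ≤ m) : Function.Injective (Phi m) := by
  rw [injective_iff_map_eq_one]
  intro u hu
  have h : ∀ v : V m, actV u v = v := fun v => by
    have := congrArg (fun (e : (GG m) ≃g (GG m)) => e v) hu
    simpa [Phi_apply] using this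
  have p0 : Fin m := ⟨0, by omega⟩
  have hr : u.right = 1 := by
    apply Equiv.ext
    intro c
    exact congrArg Prod.fst (h (c, ⟨0, by omega⟩, 0))
  apply Wr.ext _ hr
  funext c
  have hx : ∀ x : X m, actX (u.left c) x = x := by
    intro x
    have := h (c, x)
    rw [actV] at this
    rw [hr] at this
    simpa using this
  apply Wr.ext
  · funext q
    have h0 := hx (q, 0)
    have hrq : (u.left c).right q = q := congrArg Prod.fst (hx (q, 0))
    have h2 : (0 : ZMod 2) + Multiplicative.toAdd ((u.left c).left ((u.left c).right q)) = 0 :=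
      congrArg Prod.snd (hx (q, 0))
    rw [hrq, zero_add] at h2
    show (u.left c).left q = (1 : Z2)
    have : Multiplicative.toAdd ((u.left c).left q) = Multiplicative.toAdd (1 : Z2) := by
      simpa using h2
    exact Multiplicative.toAdd.injective this
  · apply Equiv.ext
    intro q
    exact congrArg Prod.fst (hx (q, 0))

/-- The main group isomorphism for the model graph. -/
noncomputable def mainEquiv (hm : 2 ≤ m) :
    ((GG m) ≃g (GG m)) ≃* Wr (W m) 2 :=
  (MulEquiv.ofBijective (Phi m) ⟨phi_injective hm, phi_surjective hm⟩).symm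

end CayleyAux

namespace CayleyAux

open DihedralGroup

lemma r_inv {n : ℕ} (i : ZMod n) : (r i)⁻¹ = r (-i) :=
  inv_eq_of_mul_eq_one_right (by rw [r_mul_r, add_neg_cancel]; exact one_def.symm)

lemma sr_inv {n : ℕ} (i : ZMod n) : (sr i)⁻¹ = sr i :=
  inv_eq_of_mul_eq_one_right (sr_mul_self i)

lemma mem_Psi {n : ℕ} (z : DihedralGroup n) :
    z ∈ Psi n ↔ (∃ i, z = sr i) ∨ z = r ((n / 2 : ℕ) : ZMod n) := Iff.rfl

lemma r_mem_Psi {n : ℕ} (a : ZMod n) :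
    r a ∈ Psi n ↔ a = ((n / 2 : ℕ) : ZMod n) := by
  simp [mem_Psi]

lemma sr_mem_Psi {n : ℕ} (a : ZMod n) : sr a ∈ Psi n := Or.inl ⟨a, rfl⟩

section Dihedral

variable {n m : ℕ}

/-- The key `ZMod` arithmetic: being `m` apart in `ZMod (m + m)` is the same as having the
same residue mod `m` and different quotients. -/
lemma zmodKey (hm : 2 ≤ m) (hnm : n = m + m) (i j : ZMod n) :
    (i ≠ j ∧ (-i + j = ((m : ℕ) : ZMod n) ∨ -j + i = ((m : ℕ) : ZMod n))) ↔
    (i.val % m = j.val % m ∧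
      ¬ (((i.val / m : ℕ) : ZMod 2) = ((j.val / m : ℕ) : ZMod 2))) := by
  haveI : NeZero n := ⟨by omega⟩
  have hM : ((m : ℕ) : ZMod n).val = m := ZMod.val_cast_of_lt (by omega)
  have e1 : ∀ a b : ZMod n, -a + b = ((m : ℕ) : ZMod n) ↔ b.val = (a.val + m) % n := by
    intro a b
    rw [neg_add_eq_sub, sub_eq_iff_eq_add]
    constructor
    · rintro rfl
      rw [ZMod.val_add, hM, Nat.add_comm]
    · intro h
      apply ZMod.val_injective
      rw [ZMod.val_add, hM, Nat.add_comm m a.val, ← h]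
  have hij : i ≠ j ↔ i.val ≠ j.val := (ZMod.val_injective n).ne_iff.symm
  have h2 : ∀ a b : ℕ, ((a : ZMod 2) = (b : ZMod 2)) ↔ a % 2 = b % 2 := fun a b =>
    ZMod.natCast_eq_natCast_iff' a b 2
  rw [e1, e1, hij, h2]
  have hi := ZMod.val_lt i
  have hj := ZMod.val_lt j
  subst hnm
  set a := i.val with ha
  set b := j.val with hb
  have key3 : ∀ x : ℕ, x < m + m →
      (x < m ∧ (x + m) % (m + m) = x + m ∧ x % m = x ∧ x / m = 0) ∨
      (m ≤ x ∧ (x + m) % (m + m) = x - m ∧ x % m = x - m ∧ x / m = 1) := by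
    intro x hx
    rcases Nat.lt_or_ge x m with h | h
    · exact Or.inl ⟨h, Nat.mod_eq_of_lt (by omega), Nat.mod_eq_of_lt h, Nat.div_eq_of_lt h⟩
    · refine Or.inr ⟨h, ?_, ?_, ?_⟩
      · rw [Nat.mod_eq_sub_mod (by omega)]
        have hxx : x + m - (m + m) = x - m := by omega
        rw [hxx, Nat.mod_eq_of_lt (by omega)]
      · rw [Nat.mod_eq_sub_mod h, Nat.mod_eq_of_lt (by omega)]
      · exact Nat.div_eq_of_lt_le (by omega) (by omega)
  rcases key3 a hi with ⟨h1, e1, e2, e3⟩ | ⟨h1, e1, e2, e3⟩ <;>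
    rcases key3 b hj with ⟨k1, f1, f2, f3⟩ | ⟨k1, f1, f2, f3⟩ <;>
    rw [e1, e2, e3, f1, f2, f3] <;> omega

/-- Encoding of the dihedral group on the model vertex set. -/
def dEnc (hm : 2 ≤ m) (hnm : n = m + m) : DihedralGroup n ≃ V m where
  toFun x :=
    match x with
    | .r i => (0, ⟨i.val % m, Nat.mod_lt _ (by omega)⟩, ((i.val / m : ℕ) : ZMod 2))
    | .sr i => (1, ⟨i.val % m, Nat.mod_lt _ (by omega)⟩, ((i.val / m : ℕ) : ZMod 2))
  invFun v :=
    if v.1 = 0 then .r ((v.2.1.val + v.2.2.val * m : ℕ) : ZMod n)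
    else .sr ((v.2.1.val + v.2.2.val * m : ℕ) : ZMod n)
  left_inv := by
    haveI : NeZero n := ⟨by omega⟩
    have key : ∀ i : ZMod n,
        (((⟨i.val % m, Nat.mod_lt _ (by omega)⟩ : Fin m).val +
          ((i.val / m : ℕ) : ZMod 2).val * m : ℕ) : ZMod n) = i := by
      intro i
      have hlt : i.val < m + m := by have := ZMod.val_lt i; omega
      have hv : ((i.val / m : ℕ) : ZMod 2).val = i.val / m := by
        rw [ZMod.val_natCast]
        exact Nat.mod_eq_of_lt ((Nat.div_lt_iff_lt_mul (by omega)).mpr (by omega))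
      rw [hv]
      show (((i.val % m) + (i.val / m) * m : ℕ) : ZMod n) = i
      rw [Nat.mod_add_div']
      exact ZMod.natCast_zmod_val i
    rintro (i | i)
    · simpa using key i
    · simpa using key i
  right_inv := by
    haveI : NeZero n := ⟨by omega⟩
    rintro ⟨c, p, s⟩
    have hs : s.val = 0 ∨ s.val = 1 := by
      have := ZMod.val_lt s
      omega
    have hlt : p.val + s.val * m < n := by
      have := p.2
      rcases hs with h | h <;> rw [h] <;> omega
    have hval : ((p.val + s.val * m : ℕ) : ZMod n).val = p.val + s.val * m :=
      ZMod.val_cast_of_lt hlt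
    have hmod : (p.val + s.val * m) % m = p.val := by
      rcases hs with h | h <;> rw [h]
      · simpa using Nat.mod_eq_of_lt p.2
      · rw [one_mul, Nat.add_mod_right]
        exact Nat.mod_eq_of_lt p.2
    have hdiv : (p.val + s.val * m) / m = s.val := by
      rcases hs with h | h <;> rw [h]
      · simpa using Nat.div_eq_of_lt p.2
      · rw [one_mul, Nat.add_div_right _ (by omega), Nat.div_eq_of_lt p.2]
    have hsnd : (((p.val + s.val * m : ℕ) : ZMod n).val / m : ℕ) = (s.val : ℕ) := by
      rw [hval, hdiv]
    have hc : c = 0 ∨ c = 1 := by revert c; decide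
    rcases hc with rfl | rfl
    · beta_reduce
      rw [if_pos rfl]
      refine Prod.ext rfl (Prod.ext ?_ ?_)
      · apply Fin.ext
        show ((p.val + s.val * m : ℕ) : ZMod n).val % m = p.val
        rw [hval, hmod]
      · show ((((p.val + s.val * m : ℕ) : ZMod n).val / m : ℕ) : ZMod 2) = s
        rw [hsnd]
        exact ZMod.natCast_zmod_val s
    · beta_reduce
      rw [if_neg (show ¬ (((1 : Fin 2), p, s) : V m).1 = 0 by simp)]
      refine Prod.ext rfl (Prod.ext ?_ ?_)
      · apply Fin.ext
        show ((p.val + s.val * m : ℕ) : ZMod n).val % m = p.val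
        rw [hval, hmod]
      · show ((((p.val + s.val * m : ℕ) : ZMod n).val / m : ℕ) : ZMod 2) = s
        rw [hsnd]
        exact ZMod.natCast_zmod_val s

end Dihedral

end CayleyAux

namespace CayleyAux

open DihedralGroup

variable {n m : ℕ}

lemma dEnc_adj (hm : 2 ≤ m) (hnm : n = m + m) (x y : DihedralGroup n) :
    (GG m).Adj (dEnc hm hnm x) (dEnc hm hnm y) ↔ (cayley (Psi n)).Adj x y := by
  have hn2 : n / 2 = m := by omega
  rcases x with i | i <;> rcases y with j | j
  · -- r, r
    have hadj : (cayley (Psi n)).Adj (r i) (r j) ↔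
        (r i ≠ r j ∧ (-i + j = ((m : ℕ) : ZMod n) ∨ -j + i = ((m : ℕ) : ZMod n))) := by
      have hmem1 : (r i)⁻¹ * r j ∈ Psi n ↔ -i + j = ((m : ℕ) : ZMod n) := by
        rw [r_inv, r_mul_r, r_mem_Psi, hn2]
      have hmem2 : (r j)⁻¹ * r i ∈ Psi n ↔ -j + i = ((m : ℕ) : ZMod n) := by
        rw [r_inv, r_mul_r, r_mem_Psi, hn2]
      simp only [cayley, SimpleGraph.fromRel_adj, hmem1, hmem2]
    have hrne : (r i ≠ r j) ↔ i ≠ j := by simp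
    rw [hadj, hrne, zmodKey hm hnm i j]
    constructor
    · rintro (h | ⟨h1, h2⟩)
      · exact absurd rfl h
      · exact ⟨congrArg Fin.val h1, h2⟩
    · rintro ⟨h1, h2⟩
      exact Or.inr ⟨Fin.ext h1, h2⟩
  · -- r, sr
    have hR : (cayley (Psi n)).Adj (r i) (sr j) := by
      refine ⟨by simp, Or.inl ?_⟩
      show (r i)⁻¹ * sr j ∈ Psi n
      rw [r_inv, r_mul_sr]
      exact sr_mem_Psi _
    have hL : (GG m).Adj (dEnc hm hnm (r i)) (dEnc hm hnm (sr j)) :=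
      Or.inl (show (0 : Fin 2) ≠ 1 by decide)
    exact iff_of_true hL hR
  · -- sr, r
    have hR : (cayley (Psi n)).Adj (sr i) (r j) := by
      refine ⟨by simp, Or.inl ?_⟩
      show (sr i)⁻¹ * r j ∈ Psi n
      rw [sr_inv, sr_mul_r]
      exact sr_mem_Psi _
    have hL : (GG m).Adj (dEnc hm hnm (sr i)) (dEnc hm hnm (r j)) :=
      Or.inl (show (1 : Fin 2) ≠ 0 by decide)
    exact iff_of_true hL hR
  · -- sr, sr
    have hadj : (cayley (Psi n)).Adj (sr i) (sr j) ↔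
        (sr i ≠ sr j ∧ (-i + j = ((m : ℕ) : ZMod n) ∨ -j + i = ((m : ℕ) : ZMod n))) := by
      have hmem1 : (sr i)⁻¹ * sr j ∈ Psi n ↔ -i + j = ((m : ℕ) : ZMod n) := by
        rw [sr_inv, sr_mul_sr, sub_eq_neg_add, r_mem_Psi, hn2]
      have hmem2 : (sr j)⁻¹ * sr i ∈ Psi n ↔ -j + i = ((m : ℕ) : ZMod n) := by
        rw [sr_inv, sr_mul_sr, sub_eq_neg_add, r_mem_Psi, hn2]
      simp only [cayley, SimpleGraph.fromRel_adj, hmem1, hmem2]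
    have hrne : (sr i ≠ sr j) ↔ i ≠ j := by simp
    rw [hadj, hrne, zmodKey hm hnm i j]
    constructor
    · rintro (h | ⟨h1, h2⟩)
      · exact absurd rfl h
      · exact ⟨congrArg Fin.val h1, h2⟩
    · rintro ⟨h1, h2⟩
      exact Or.inr ⟨Fin.ext h1, h2⟩

/-- The graph isomorphism between the Cayley graph and the model graph. -/
def dIso (hm : 2 ≤ m) (hnm : n = m + m) : (cayley (Psi n)) ≃g (GG m) :=
  ⟨dEnc hm hnm, by intro a b; exact dEnc_adj hm hnm a b⟩

/-- Conjugating automorphism groups by a graph isomorphism. -/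
def autCongr {α β : Type*} {G1 : SimpleGraph α} {G2 : SimpleGraph β} (e : G1 ≃g G2) :
    (G1 ≃g G1) ≃* (G2 ≃g G2) where
  toFun φ := e.symm.trans (φ.trans e)
  invFun ψ := e.trans (ψ.trans e.symm)
  left_inv φ := RelIso.ext fun x => by simp
  right_inv ψ := RelIso.ext fun x => by simp
  map_mul' φ ψ := RelIso.ext fun x => by simp [RelIso.mul_apply]

end CayleyAux

theorem cayley_aut_group (n : ℕ) (hn : 4 ≤ n) (hev : Even n) :
    (∀ e : DihedralGroup n ≃ DihedralGroup n,
      (∀ u v, (cayley (Psi n)).Adj (e u) (e v) ↔ (cayley (Psi n)).Adj u v) ↔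
      (∀ u v, (cayley (Psi n))ᶜ.Adj (e u) (e v) ↔ (cayley (Psi n))ᶜ.Adj u v)) ∧
    Nonempty ((cayley (Psi n) ≃g cayley (Psi n)) ≃*
      Wr (Wr (Multiplicative (ZMod 2)) (n / 2)) 2) := by
  constructor
  · intro e
    constructor
    · intro h u v
      simp only [SimpleGraph.compl_adj, h, ne_eq, EmbeddingLike.apply_eq_iff_eq]
    · intro h u v
      by_cases huv : u = v
      · subst huv; simp
      · have h1 := h u v
        have hne : e u ≠ e v := fun hh => huv (e.injective hh)
        rw [SimpleGraph.compl_adj, SimpleGraph.compl_adj] at h1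
        simp only [hne, huv, ne_eq, not_false_iff, true_and] at h1
        exact not_iff_not.mp h1
  · obtain ⟨t, ht⟩ := hev
    have hm : 2 ≤ t := by omega
    have hn2 : n / 2 = t := by omega
    rw [hn2]
    exact ⟨(CayleyAux.autCongr (CayleyAux.dIso hm ht)).trans (CayleyAux.mainEquiv hm)⟩
end

section
/- Let n ≥ 4 be an even integer and Λ = Cay(D_{2n}, Ψ) with Ψ = {b, ab, ..., a^{n-1}b} ∪ {a^{n/2}}. The set R = {a, a^2, ..., a^{n/2}} ∪ {ab, a^2b, ..., a^{n/2}b} is not a strong resolving set of Λ. -/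
/-- `w` strongly resolves `u` and `v`: one of them lies on a shortest path
between the other and `w`. -/
def StronglyResolves {V : Type*} (G : SimpleGraph V) (w u v : V) : Prop :=
  G.dist u w = G.dist u v + G.dist v w ∨ G.dist v w = G.dist v u + G.dist u w

/-- `S` is a strong resolving set of `G`. -/
def IsStrongResolvingSet {V : Type*} (G : SimpleGraph V) (S : Set V) : Prop :=
  ∀ u v : V, u ≠ v → ∃ w ∈ S, StronglyResolves G w u v

open DihedralGroup SimpleGraph

lemma inv_r {n : ℕ} (i : ZMod n) : (r i)⁻¹ = r (-i) := rfl

lemma adj_r_sr {n : ℕ} (i j : ZMod n) : (cayley (Psi n)).Adj (r i) (sr j) := by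
  rw [cayley, SimpleGraph.fromRel_adj]
  exact ⟨by simp, Or.inl (Or.inl ⟨j + i, by rw [_root_.inv_r, r_mul_sr]; ring_nf⟩)⟩

lemma dist_le_two {n : ℕ} (i j : ZMod n) :
    (cayley (Psi n)).dist (r i) (r j) ≤ 2 := by
  simpa using SimpleGraph.dist_le
    (Walk.cons (adj_r_sr i 0) (Walk.cons (adj_r_sr j 0).symm Walk.nil))

lemma dist_le_one {n : ℕ} (i j : ZMod n) :
    (cayley (Psi n)).dist (r i) (sr j) ≤ 1 := by
  simpa using SimpleGraph.dist_le (Walk.cons (adj_r_sr i j) Walk.nil)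

lemma reach_r {n : ℕ} (i : ZMod n) (x : DihedralGroup n) :
    (cayley (Psi n)).Reachable (r i) x := by
  cases x with
  | r j => exact ⟨Walk.cons (adj_r_sr i 0) (Walk.cons (adj_r_sr j 0).symm Walk.nil)⟩
  | sr j => exact ⟨Walk.cons (adj_r_sr i j) Walk.nil⟩

theorem cayley_not_strong_resolving (n : ℕ) (hn : 4 ≤ n) (hev : Even n) :
    ¬ IsStrongResolvingSet (cayley (Psi n))
      {x : DihedralGroup n | ∃ i : ℕ, 1 ≤ i ∧ i ≤ n / 2 ∧
        (x = (DihedralGroup.r 1) ^ i ∨ x = (DihedralGroup.r 1) ^ i * DihedralGroup.sr 0)} := by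
  intro H
  have hn2 : n / 2 < n := by omega
  -- helper: equality of rotations with nat-cast indices
  have rcast : ∀ a b : ℕ, a < n → b < n →
      ((r (a : ZMod n) : DihedralGroup n) = r (b : ZMod n) ↔ a = b) := by
    intro a b ha hb
    rw [r.injEq, ZMod.natCast_eq_natCast_iff', Nat.mod_eq_of_lt ha, Nat.mod_eq_of_lt hb]
  have hneg : -(((n - 1 : ℕ) : ZMod n)) = ((1 : ℕ) : ZMod n) := by
    have h1 : ((n - 1 : ℕ) : ZMod n) + ((1 : ℕ) : ZMod n) = ((n : ℕ) : ZMod n) := by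
      rw [← Nat.cast_add]; congr 1; omega
    rw [ZMod.natCast_self] at h1
    linear_combination -h1
  have huv : (r ((0 : ℕ) : ZMod n) : DihedralGroup n) ≠ r ((n - 1 : ℕ) : ZMod n) := by
    rw [Ne, rcast _ _ (by omega) (by omega)]; omega
  have hz : ((0 : ℕ) : ZMod n) = (0 : ZMod n) := by norm_num
  -- u and v are not adjacent
  have hnadj : ¬ (cayley (Psi n)).Adj (r ((0:ℕ) : ZMod n)) (r ((n - 1 : ℕ) : ZMod n)) := by
    rw [cayley, SimpleGraph.fromRel_adj]
    rintro ⟨-, h | h⟩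
    · rw [_root_.inv_r, hz, neg_zero, r_mul_r, zero_add] at h
      rcases h with ⟨i, hi⟩ | h
      · exact absurd hi (by simp)
      · rw [Set.mem_singleton_iff, rcast _ _ (by omega) (by omega)] at h; omega
    · rw [_root_.inv_r, hz, r_mul_r, hneg, add_zero] at h
      rcases h with ⟨i, hi⟩ | h
      · exact absurd hi (by simp)
      · rw [Set.mem_singleton_iff, rcast _ _ (by omega) (by omega)] at h; omega
  -- dist u v = 2
  have hd2 : (cayley (Psi n)).dist (r ((0:ℕ) : ZMod n)) (r ((n - 1 : ℕ) : ZMod n)) = 2 := by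
    have h1 : (cayley (Psi n)).dist (r ((0:ℕ):ZMod n)) (r ((n-1:ℕ):ZMod n)) ≠ 1 := by
      intro h; rw [SimpleGraph.dist_eq_one_iff_adj] at h; exact hnadj h
    have h0 : 0 < (cayley (Psi n)).dist (r ((0:ℕ):ZMod n)) (r ((n-1:ℕ):ZMod n)) :=
      (reach_r _ _).pos_dist_of_ne huv
    have hle := dist_le_two (n := n) ((0:ℕ) : ZMod n) ((n - 1 : ℕ) : ZMod n)
    omega
  obtain ⟨w, hwR, hres⟩ := H _ _ huv
  obtain ⟨i, hi1, hi2, hw⟩ := hwR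
  have hw' : w = r ((i : ℕ) : ZMod n) ∨ w = sr (-((i : ℕ) : ZMod n)) := by
    rcases hw with hw | hw <;> rw [r_one_pow] at hw
    · exact Or.inl hw
    · rw [r_mul_sr, zero_sub] at hw; exact Or.inr hw
  have hwu : w ≠ r ((0:ℕ) : ZMod n) := by
    rcases hw' with hw' | hw' <;> rw [hw']
    · rw [Ne, rcast _ _ (by omega) (by omega)]; omega
    · intro h; cases h
  have hwv : w ≠ r ((n - 1 : ℕ) : ZMod n) := by
    rcases hw' with hw' | hw' <;> rw [hw']
    · rw [Ne, rcast _ _ (by omega) (by omega)]; omega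
    · simp
  have hdu : 0 < (cayley (Psi n)).dist (r ((0:ℕ):ZMod n)) w ∧
      (cayley (Psi n)).dist (r ((0:ℕ):ZMod n)) w ≤ 2 := by
    refine ⟨(reach_r _ _).pos_dist_of_ne (Ne.symm hwu), ?_⟩
    rcases hw' with hw' | hw' <;> rw [hw']
    · exact dist_le_two _ _
    · exact (dist_le_one _ _).trans (by omega)
  have hdv : 0 < (cayley (Psi n)).dist (r ((n-1:ℕ):ZMod n)) w ∧
      (cayley (Psi n)).dist (r ((n-1:ℕ):ZMod n)) w ≤ 2 := by
    refine ⟨(reach_r _ _).pos_dist_of_ne (Ne.symm hwv), ?_⟩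
    rcases hw' with hw' | hw' <;> rw [hw']
    · exact dist_le_two _ _
    · exact (dist_le_one _ _).trans (by omega)
  have hcomm : (cayley (Psi n)).dist (r ((n-1:ℕ):ZMod n)) (r ((0:ℕ):ZMod n)) = 2 := by
    rw [SimpleGraph.dist_comm]; exact hd2
  rcases hres with h | h
  · rw [hd2] at h; omega
  · rw [hcomm] at h; omega
end
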